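/- Let G be an n×n positive semidefinite real matrix and β ∈ (0,1]. Then there exists a subspace W ⊆ ℝ^n with dim(W) ≥ (1-β)n such that for all w ∈ W, w^T G w ≤ (1/β) w^T diag(G) w, where diag(G) is the diagonal matrix agreeing with G on the diagonal. -/

import Mathlib

open Matrix

private lemma sum_dotProduct' {n : ℕ} {ι : Type*} (t : Finset ι) (f : ι → (Fin n → ℝ))
    (y : Fin n → ℝ) : (∑ j ∈ t, f j) ⬝ᵥ y = ∑ j ∈ t, (f j ⬝ᵥ y) := by
  simp only [dotProduct, Finset.sum_apply, Finset.sum_mul]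
  rw [Finset.sum_comm]

private lemma dotProduct_sum' {n : ℕ} {ι : Type*} (t : Finset ι) (f : ι → (Fin n → ℝ))
    (y : Fin n → ℝ) : y ⬝ᵥ (∑ j ∈ t, f j) = ∑ j ∈ t, (y ⬝ᵥ f j) := by
  simp only [dotProduct, Finset.sum_apply, Finset.mul_sum]
  rw [Finset.sum_comm]

private lemma diag_mulVec_dot {n : ℕ} (d x y : Fin n → ℝ) :
    ((diagonal d).mulVec x) ⬝ᵥ y = x ⬝ᵥ ((diagonal d).mulVec y) := by
  simp only [dotProduct, mulVec_diagonal]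
  exact Finset.sum_congr rfl fun i _ => by ring

/-- Lemma 8 (diagdom): for an `n × n` PSD real matrix `G` and `β ∈ (0,1]`, there is a
subspace `W ⊆ ℝⁿ` with `dim W ≥ (1-β)n` such that `wᵀ G w ≤ (1/β) wᵀ diag(G) w`
for all `w ∈ W`. -/
theorem exists_subspace_diag_dominates (n : ℕ) (G : Matrix (Fin n) (Fin n) ℝ)
    (hG : G.PosSemidef) (β : ℝ) (hβ : β ∈ Set.Ioc (0 : ℝ) 1) :
    ∃ W : Submodule ℝ (Fin n → ℝ),
      (1 - β) * n ≤ (Module.finrank ℝ W : ℝ) ∧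
      ∀ w ∈ W, w ⬝ᵥ G.mulVec w ≤ (1 / β) * (w ⬝ᵥ (Matrix.diagonal fun i => G i i).mulVec w) := by
  classical
  obtain ⟨hβ0, hβ1⟩ := hβ
  have hdiag_nonneg : ∀ i, 0 ≤ G i i := by
    intro i
    have h := hG.dotProduct_mulVec_nonneg (Pi.single i 1)
    simpa [dotProduct, mulVec, Pi.single_apply] using h
  have hcol : ∀ i, G i i = 0 → G *ᵥ (Pi.single i 1) = 0 := by
    intro i h
    refine (hG.dotProduct_mulVec_zero_iff _).mp ?_
    have hex : (star (Pi.single i 1) : Fin n → ℝ) ⬝ᵥ G *ᵥ (Pi.single i 1) = G i i := by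
      simp [dotProduct, mulVec, Pi.single_apply]
    rw [hex, h]
  set d : Fin n → ℝ := fun i => if G i i = 0 then 1 else G i i with hd
  have hd_pos : ∀ i, 0 < d i := by
    intro i
    by_cases h : G i i = 0
    · simp [hd, h]
    · simpa [hd, h] using lt_of_le_of_ne (hdiag_nonneg i) (Ne.symm h)
  set s : Fin n → ℝ := fun i => Real.sqrt (d i) with hs
  have hs_pos : ∀ i, 0 < s i := fun i => Real.sqrt_pos.mpr (hd_pos i)
  have hs_sq : ∀ i, s i * s i = d i := fun i => Real.mul_self_sqrt (hd_pos i).le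
  set E : Matrix (Fin n) (Fin n) ℝ := diagonal (fun i => (s i)⁻¹) with hE
  set F : Matrix (Fin n) (Fin n) ℝ := diagonal s with hF
  have hEF : E * F = 1 := by
    rw [hE, hF, diagonal_mul_diagonal,
      show (fun i => (s i)⁻¹ * s i) = fun _ => (1:ℝ) from
        funext fun i => inv_mul_cancel₀ (hs_pos i).ne', diagonal_one]
  have hFE : F * E = 1 := by
    rw [hF, hE, diagonal_mul_diagonal,
      show (fun i => s i * (s i)⁻¹) = fun _ => (1:ℝ) from
        funext fun i => mul_inv_cancel₀ (hs_pos i).ne', diagonal_one]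
  set C : Matrix (Fin n) (Fin n) ℝ := E * G * E with hC
  have hCpsd : C.PosSemidef := by
    have h := hG.mul_mul_conjTranspose_same E
    have hEH : Eᴴ = E := by
      rw [hE, diagonal_conjTranspose]
      congr 1
    rwa [hEH] at h
  have hH : C.IsHermitian := hCpsd.isHermitian
  set μ : Fin n → ℝ := hH.eigenvalues with hμ
  set vv : Fin n → (Fin n → ℝ) := fun j => (fun i => hH.eigenvectorBasis j i) with hvv
  have hμ_nonneg : ∀ j, 0 ≤ μ j := hCpsd.eigenvalues_nonneg
  have hCv : ∀ j, C *ᵥ vv j = μ j • vv j := fun j => hH.mulVec_eigenvectorBasis j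
  have hortho : ∀ j k, vv j ⬝ᵥ vv k = if j = k then 1 else 0 := by
    intro j k
    have h := orthonormal_iff_ite.mp hH.eigenvectorBasis.orthonormal j k
    simpa [PiLp.inner_apply, RCLike.inner_apply, dotProduct, hvv, mul_comm] using h
  have hexp : ∀ x : Fin n → ℝ, x = ∑ j, (vv j ⬝ᵥ x) • vv j := by
    intro x
    have h1 := hH.eigenvectorBasis.sum_repr' (WithLp.toLp 2 x)
    have h2 : ∀ j, (inner (𝕜 := ℝ) (hH.eigenvectorBasis j) (WithLp.toLp 2 x : EuclideanSpace ℝ (Fin n)))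
        = vv j ⬝ᵥ x := by
      intro j
      simp [PiLp.inner_apply, RCLike.inner_apply, dotProduct, hvv, mul_comm]
    simp_rw [h2] at h1
    have h3 := congrArg (WithLp.ofLp (p := 2)) h1
    rw [WithLp.ofLp_sum] at h3
    simp only [WithLp.ofLp_smul] at h3
    exact h3.symm
  have hmulsum : ∀ c : Fin n → ℝ, C *ᵥ (∑ j, c j • vv j) = ∑ j, (c j * μ j) • vv j := by
    intro c
    rw [show C *ᵥ (∑ j, c j • vv j) = (mulVecLin C) (∑ j, c j • vv j) from rfl, map_sum]
    refine Finset.sum_congr rfl fun j _ => ?_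
    rw [LinearMap.map_smul, mulVecLin_apply, hCv j, smul_smul]
  have key : ∀ c : Fin n → ℝ,
      (∑ j, c j • vv j) ⬝ᵥ C *ᵥ (∑ j, c j • vv j) = ∑ j, μ j * (c j)^2 := by
    intro c
    rw [hmulsum c, sum_dotProduct']
    simp only [smul_dotProduct, dotProduct_sum', dotProduct_smul,
      smul_eq_mul, hortho, mul_ite, mul_one, mul_zero, Finset.sum_ite_eq]
    refine Finset.sum_congr rfl fun j _ => ?_
    simp only [Finset.mem_univ, if_true]
    ring
  have keynorm : ∀ c : Fin n → ℝ,
      (∑ j, c j • vv j) ⬝ᵥ (∑ j, c j • vv j) = ∑ j, (c j)^2 := by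
    intro c
    rw [sum_dotProduct']
    simp only [smul_dotProduct, dotProduct_sum', dotProduct_smul,
      smul_eq_mul, hortho, mul_ite, mul_one, mul_zero, Finset.sum_ite_eq]
    refine Finset.sum_congr rfl fun j _ => ?_
    simp only [Finset.mem_univ, if_true]
    ring
  have hquad : ∀ x : Fin n → ℝ, x ⬝ᵥ C *ᵥ x = ∑ j, μ j * (vv j ⬝ᵥ x)^2 := by
    intro x
    conv_lhs => rw [hexp x]
    exact key _
  have hnormx : ∀ x : Fin n → ℝ, x ⬝ᵥ x = ∑ j, (vv j ⬝ᵥ x)^2 := by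
    intro x
    conv_lhs => rw [hexp x]
    exact keynorm _
  have htrace : ∑ j, μ j = ∑ i, C i i := by
    have hst := hH.spectral_theorem
    have h1 : C.trace = (diagonal (RCLike.ofReal ∘ μ) : Matrix (Fin n) (Fin n) ℝ).trace := by
      rw [hH.trace_eq_sum_eigenvalues]
      simp [Matrix.trace, hμ]
    have h2 : (diagonal (RCLike.ofReal ∘ μ) : Matrix (Fin n) (Fin n) ℝ).trace = ∑ j, μ j := by
      simp [Matrix.trace, Matrix.diag]
    rw [← h2, ← h1]
    simp [Matrix.trace, Matrix.diag]
  have hCii : ∀ i, C i i ≤ 1 := by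
    intro i
    have hval : C i i = (s i)⁻¹ * G i i * (s i)⁻¹ := by
      rw [hC, hE, Matrix.mul_diagonal, Matrix.diagonal_mul]
    rw [hval]
    by_cases h : G i i = 0
    · simp [h]
    · have hdi : d i = G i i := by simp [hd, h]
      have h2 : (s i)⁻¹ * (s i)⁻¹ = (d i)⁻¹ := by rw [← hs_sq i, mul_inv]
      have h3 : (s i)⁻¹ * G i i * (s i)⁻¹ = G i i * ((s i)⁻¹ * (s i)⁻¹) := by ring
      rw [h3, h2, hdi, mul_inv_cancel₀ h]
  have hsum_le : ∑ j, μ j ≤ (n : ℝ) := by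
    rw [htrace]
    calc ∑ i, C i i ≤ ∑ _i : Fin n, (1:ℝ) := Finset.sum_le_sum fun i _ => hCii i
    _ = n := by simp
  set T : Finset (Fin n) := Finset.univ.filter (fun j => μ j ≤ 1/β) with hT
  set Tc : Finset (Fin n) := Finset.univ.filter (fun j => ¬ (μ j ≤ 1/β)) with hTc
  have hTcard : (Tc.card : ℝ) ≤ β * n := by
    have h1 : (Tc.card : ℝ) * (1/β) ≤ ∑ j ∈ Tc, μ j := by
      have hle : ∀ j ∈ Tc, 1/β ≤ μ j := fun j hj =>
        le_of_lt (not_le.mp (Finset.mem_filter.mp hj).2)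
      calc (Tc.card : ℝ) * (1/β) = ∑ _j ∈ Tc, (1/β) := by
            rw [Finset.sum_const, nsmul_eq_mul]
        _ ≤ ∑ j ∈ Tc, μ j := Finset.sum_le_sum hle
    have h2 : ∑ j ∈ Tc, μ j ≤ ∑ j, μ j :=
      Finset.sum_le_sum_of_subset_of_nonneg (Finset.subset_univ _) fun j _ _ => hμ_nonneg j
    have h3 : (Tc.card : ℝ) * (1/β) ≤ n := le_trans h1 (le_trans h2 hsum_le)
    calc (Tc.card : ℝ) = ((Tc.card : ℝ) * (1/β)) * β := by rw [mul_assoc, one_div, inv_mul_cancel₀ hβ0.ne', mul_one]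
      _ ≤ (n : ℝ) * β := mul_le_mul_of_nonneg_right h3 hβ0.le
      _ = β * n := mul_comm _ _
  have hcards : (T.card : ℝ) + Tc.card = n := by
    have h := Finset.card_filter_add_card_filter_not
      (s := (Finset.univ : Finset (Fin n))) (p := fun j => μ j ≤ 1/β)
    rw [Finset.card_univ, Fintype.card_fin] at h
    exact_mod_cast congrArg (Nat.cast : ℕ → ℝ) h
  -- the subspace U in eigen-coordinates
  set b : {j // j ∈ T} → (Fin n → ℝ) := fun j => vv j.1 with hb
  have hb_li : LinearIndependent ℝ b := by
    have ho : Orthonormal ℝ (fun j : {j // j ∈ T} => hH.eigenvectorBasis j.1) :=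
      hH.eigenvectorBasis.orthonormal.comp _ Subtype.val_injective
    have h := ho.linearIndependent.map' (WithLp.linearEquiv 2 ℝ (Fin n → ℝ)).toLinearMap
      (WithLp.linearEquiv 2 ℝ (Fin n → ℝ)).ker
    exact h
  set U : Submodule ℝ (Fin n → ℝ) := Submodule.span ℝ (Set.range b) with hU
  have hU_rank : Module.finrank ℝ U = T.card := by
    rw [hU, finrank_span_eq_card hb_li, Fintype.card_coe]
  have hgen_mem : ∀ j (hj : j ∈ T), vv j ∈ U := fun j hj =>
    Submodule.subset_span ⟨⟨j, hj⟩, rfl⟩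
  have hU_orth : ∀ x ∈ U, ∀ j, j ∉ T → vv j ⬝ᵥ x = 0 := by
    intro x hx j hj
    induction hx using Submodule.span_induction with
    | mem y hy =>
      obtain ⟨⟨k, hk⟩, rfl⟩ := hy
      have hne : j ≠ k := fun hjk => hj (hjk ▸ hk)
      rw [hb]
      rw [hortho j k, if_neg hne]
    | zero => simp
    | add y z _ _ hy hz => rw [dotProduct_add, hy, hz, add_zero]
    | smul a y _ hy => rw [dotProduct_smul, hy, smul_zero]
  have hmem_of_coeffs : ∀ x : Fin n → ℝ, (∀ j, j ∉ T → vv j ⬝ᵥ x = 0) → x ∈ U := by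
    intro x hxc
    have hx := hexp x
    rw [hx]
    refine Submodule.sum_mem _ fun j _ => ?_
    by_cases hj : j ∈ T
    · exact Submodule.smul_mem _ _ (hgen_mem j hj)
    · rw [hxc j hj, zero_smul]
      exact Submodule.zero_mem _
  have hker_sub : ∀ x : Fin n → ℝ, C *ᵥ x = 0 → x ∈ U := by
    intro x hx
    apply hmem_of_coeffs
    intro j hj
    have h0 : ∑ k, μ k * (vv k ⬝ᵥ x)^2 = 0 := by
      rw [← hquad x, hx, dotProduct_zero]
    have hterm := (Finset.sum_eq_zero_iff_of_nonneg
      (fun k _ => mul_nonneg (hμ_nonneg k) (sq_nonneg _))).mp h0 j (Finset.mem_univ j)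
    have hμj : (0:ℝ) < μ j := by
      have hj' : ¬ (μ j ≤ 1/β) := by
        intro hle
        exact hj (Finset.mem_filter.mpr ⟨Finset.mem_univ j, hle⟩)
      have : (0:ℝ) < 1/β := by positivity
      linarith [not_le.mp hj']
    rcases mul_eq_zero.mp hterm with h | h
    · exact absurd h hμj.ne'
    · exact (pow_eq_zero_iff (two_ne_zero)).mp h
  have hCsingle : ∀ i, G i i = 0 → C *ᵥ (Pi.single i 1 : Fin n → ℝ) = 0 := by
    intro i h
    have h1 : E *ᵥ (Pi.single i 1 : Fin n → ℝ) = (s i)⁻¹ • (Pi.single i 1 : Fin n → ℝ) := by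
      funext k
      rw [hE]
      simp only [mulVec_diagonal, Pi.smul_apply, smul_eq_mul, Pi.single_apply]
      by_cases hk : k = i <;> simp [hk]
    calc C *ᵥ (Pi.single i 1 : Fin n → ℝ)
        = E *ᵥ (G *ᵥ (E *ᵥ (Pi.single i 1 : Fin n → ℝ))) := by
          rw [mulVec_mulVec, mulVec_mulVec]
      _ = 0 := by
          rw [h1, mulVec_smul, hcol i h, smul_zero, mulVec_zero]
  have hsingle : ∀ i, G i i = 0 → (Pi.single i 1 : Fin n → ℝ) ∈ U :=
    fun i h => hker_sub _ (hCsingle i h)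
  have hCt : Cᵀ = C := by
    ext i j
    rw [transpose_apply]
    conv_rhs => rw [← hH]
    simp [conjTranspose_apply]
  have hCsymm : ∀ x y : Fin n → ℝ, x ⬝ᵥ C *ᵥ y = y ⬝ᵥ C *ᵥ x := by
    intro x y
    rw [Matrix.dotProduct_mulVec, ← hCt, vecMul_transpose, hCt, dotProduct_comm]
  have hUbound : ∀ x ∈ U, β * (x ⬝ᵥ C *ᵥ x) ≤ x ⬝ᵥ x := by
    intro x hx
    rw [hquad x, hnormx x, Finset.mul_sum]
    refine Finset.sum_le_sum fun j _ => ?_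
    by_cases hj : j ∈ T
    · have hμj : μ j ≤ 1/β := (Finset.mem_filter.mp hj).2
      have hβμ : β * μ j ≤ 1 := by
        calc β * μ j ≤ β * (1/β) := mul_le_mul_of_nonneg_left hμj hβ0.le
          _ = 1 := by field_simp
      calc β * (μ j * (vv j ⬝ᵥ x)^2) = (β * μ j) * (vv j ⬝ᵥ x)^2 := by ring
        _ ≤ 1 * (vv j ⬝ᵥ x)^2 := mul_le_mul_of_nonneg_right hβμ (sq_nonneg _)
        _ = (vv j ⬝ᵥ x)^2 := one_mul _
    · rw [hU_orth x hx j hj]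
      simp [hμ_nonneg j]
  -- the linear equivalence given by E
  set eL : (Fin n → ℝ) ≃ₗ[ℝ] (Fin n → ℝ) :=
    LinearEquiv.ofLinear (mulVecLin E) (mulVecLin F)
      (by rw [← mulVecLin_mul, hEF, mulVecLin_one])
      (by rw [← mulVecLin_mul, hFE, mulVecLin_one]) with heL
  refine ⟨U.map (eL : (Fin n → ℝ) →ₗ[ℝ] (Fin n → ℝ)), ?_, ?_⟩
  · rw [LinearEquiv.finrank_map_eq, hU_rank]
    linarith [hTcard, hcards]
  · intro w hw
    obtain ⟨u, huU, rfl⟩ := Submodule.mem_map.mp hw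
    have hwE : (eL : (Fin n → ℝ) →ₗ[ℝ] (Fin n → ℝ)) u = E *ᵥ u := by
      rw [heL]
      rfl
    rw [hwE]
    set u₀ : Fin n → ℝ := fun i => if G i i = 0 then 0 else u i with hu₀
    set σ : Fin n → ℝ := fun i => if G i i = 0 then u i else 0 with hσ
    have husum : u = u₀ + σ := by
      funext i
      by_cases h : G i i = 0 <;> simp [hu₀, hσ, h]
    have hσ_repr : σ = ∑ i ∈ Finset.univ.filter (fun i => G i i = 0),
        u i • (Pi.single i 1 : Fin n → ℝ) := by
      funext k
      rw [Finset.sum_apply]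
      simp only [Pi.smul_apply, Pi.single_apply, smul_eq_mul, mul_ite, mul_one, mul_zero]
      rw [Finset.sum_ite_eq]
      simp [hσ, Finset.mem_filter]
    have hσU : σ ∈ U := by
      rw [hσ_repr]
      exact Submodule.sum_mem _ fun i hi =>
        Submodule.smul_mem _ _ (hsingle i (Finset.mem_filter.mp hi).2)
    have hσker : C *ᵥ σ = 0 := by
      rw [hσ_repr]
      rw [show C *ᵥ (∑ i ∈ Finset.univ.filter (fun i => G i i = 0),
        u i • (Pi.single i 1 : Fin n → ℝ)) = (mulVecLin C) _ from rfl, map_sum]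
      refine Finset.sum_eq_zero fun i hi => ?_
      rw [LinearMap.map_smul, mulVecLin_apply, hCsingle i (Finset.mem_filter.mp hi).2, smul_zero]
    have hu₀U : u₀ ∈ U := by
      have h : u₀ = u - σ := by
        funext i
        by_cases hgi : G i i = 0 <;> simp [hu₀, hσ, hgi]
      rw [h]
      exact Submodule.sub_mem _ huU hσU
    have hquad_eq : u ⬝ᵥ C *ᵥ u = u₀ ⬝ᵥ C *ᵥ u₀ := by
      have h1 : C *ᵥ u = C *ᵥ u₀ := by
        conv_lhs => rw [husum]
        rw [mulVec_add, hσker, add_zero]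
      rw [h1]
      conv_lhs => rw [husum]
      rw [add_dotProduct]
      have h2 : σ ⬝ᵥ C *ᵥ u₀ = 0 := by
        rw [hCsymm σ u₀, hσker, dotProduct_zero]
      rw [h2, add_zero]
    have hL : (E *ᵥ u) ⬝ᵥ G *ᵥ (E *ᵥ u) = u ⬝ᵥ C *ᵥ u := by
      have hEdot : ∀ x y : Fin n → ℝ, (E *ᵥ x) ⬝ᵥ y = x ⬝ᵥ (E *ᵥ y) := by
        intro x y
        rw [hE]
        exact diag_mulVec_dot _ x y
      calc (E *ᵥ u) ⬝ᵥ G *ᵥ (E *ᵥ u) = u ⬝ᵥ (E *ᵥ (G *ᵥ (E *ᵥ u))) := hEdot _ _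
        _ = u ⬝ᵥ C *ᵥ u := by
            rw [mulVec_mulVec, mulVec_mulVec]
    have hR : (E *ᵥ u) ⬝ᵥ (Matrix.diagonal fun i => G i i) *ᵥ (E *ᵥ u) = u₀ ⬝ᵥ u₀ := by
      rw [hE]
      simp only [dotProduct, mulVec_diagonal, hu₀]
      refine Finset.sum_congr rfl fun i _ => ?_
      by_cases h : G i i = 0
      · simp [h]
      · have hdi : G i i = s i * s i := by rw [hs_sq i]; simp [hd, h]
        have hsne : s i ≠ 0 := (hs_pos i).ne'
        simp only [if_neg h]
        rw [hdi]
        field_simp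
    rw [hL, hR, hquad_eq]
    have hb := hUbound u₀ hu₀U
    have h4 : u₀ ⬝ᵥ C *ᵥ u₀ ≤ (u₀ ⬝ᵥ u₀) / β := (le_div_iff₀ hβ0).mpr (by linarith)
    calc u₀ ⬝ᵥ C *ᵥ u₀ ≤ (u₀ ⬝ᵥ u₀) / β := h4
      _ = (1/β) * (u₀ ⬝ᵥ u₀) := by ring
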